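/- arXiv:2308.10106 — 3 statements merged into one kernel-verified Lean document; each statement's English description precedes it below -/
import Mathlib

section
/- Let A ⊆ ℝ^d be finite, K = pos A, L = lpos A its lineality space, and let pr A be the orthogonal projection of A onto L^⊥. Then the polar cone K° of K equals L^⊥ ∩ (pos(pr A))°, and K° is a full-dimensional cone inside the subspace L^⊥. -/
open scoped RealInnerProductSpace

/-- The conical hull (set of nonnegative combinations) of a set `V` in `ℝ^d`. -/
def posHull {d : ℕ} (V : Set (EuclideanSpace ℝ (Fin d))) : Set (EuclideanSpace ℝ (Fin d)) :=
  {x | ∃ (s : Finset (EuclideanSpace ℝ (Fin d))) (c : EuclideanSpace ℝ (Fin d) → ℝ),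
    ↑s ⊆ V ∧ (∀ v ∈ s, 0 ≤ c v) ∧ x = ∑ v ∈ s, c v • v}

/-- The lineality set `pos A ∩ (− pos A)` of the conical hull of `A`. -/
def linealitySet {d : ℕ} (A : Set (EuclideanSpace ℝ (Fin d))) : Set (EuclideanSpace ℝ (Fin d)) :=
  posHull A ∩ (-posHull A)

namespace PolarAux

variable {d : ℕ}

lemma subset_posHull (V : Set (EuclideanSpace ℝ (Fin d))) : V ⊆ posHull V := by
  intro v hv
  classical
  refine ⟨{v}, fun _ => 1, by simpa, fun _ _ => zero_le_one, by simp⟩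

lemma posHull_mono {V W : Set (EuclideanSpace ℝ (Fin d))} (h : V ⊆ W) :
    posHull V ⊆ posHull W := by
  rintro x ⟨s, c, hs, hc, rfl⟩
  exact ⟨s, c, hs.trans h, hc, rfl⟩

lemma mem_posHull_finset {A : Finset (EuclideanSpace ℝ (Fin d))} {x : EuclideanSpace ℝ (Fin d)} :
    x ∈ posHull (A : Set (EuclideanSpace ℝ (Fin d))) ↔
      ∃ c : EuclideanSpace ℝ (Fin d) → ℝ, (∀ v ∈ A, 0 ≤ c v) ∧ x = ∑ v ∈ A, c v • v := by
  classical
  constructor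
  · rintro ⟨s, c, hs, hc, rfl⟩
    have hsub : s ⊆ A := Finset.coe_subset.mp hs
    refine ⟨fun v => if v ∈ s then c v else 0, ?_, ?_⟩
    · intro v _; dsimp only; split
      · exact hc _ ‹_›
      · exact le_refl 0
    · rw [← Finset.sum_subset hsub (by intro v _ hv; simp [hv])]
      exact Finset.sum_congr rfl (by intro v hv; simp [hv])
  · rintro ⟨c, hc, rfl⟩
    exact ⟨A, c, subset_rfl, hc, rfl⟩

lemma polar_posHull_eq (V : Set (EuclideanSpace ℝ (Fin d))) :
    {x : EuclideanSpace ℝ (Fin d) | ∀ a ∈ posHull V, ⟪a, x⟫ ≤ 0} =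
      {x : EuclideanSpace ℝ (Fin d) | ∀ a ∈ V, ⟪a, x⟫ ≤ 0} := by
  ext x
  constructor
  · intro hx a ha
    exact hx a (subset_posHull V ha)
  · rintro hx a ⟨s, c, hs, hc, rfl⟩
    rw [sum_inner]
    refine Finset.sum_nonpos (fun v hv => ?_)
    rw [real_inner_smul_left]
    exact mul_nonpos_of_nonneg_of_nonpos (hc v hv) (hx v (hs hv))

lemma carath (n : ℕ) (s : Finset (EuclideanSpace ℝ (Fin d))) (hn : s.card = n)
    (c : EuclideanSpace ℝ (Fin d) → ℝ) (hc : ∀ v ∈ s, 0 ≤ c v) :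
    ∃ t : Finset (EuclideanSpace ℝ (Fin d)), t ⊆ s ∧
      LinearIndependent ℝ ((↑) : t → EuclideanSpace ℝ (Fin d)) ∧
      ∃ c' : EuclideanSpace ℝ (Fin d) → ℝ, (∀ v ∈ t, 0 ≤ c' v) ∧
        (∑ v ∈ s, c v • v) = ∑ v ∈ t, c' v • v := by
  classical
  induction n using Nat.strong_induction_on generalizing s c with
  | _ n ih =>
  by_cases hli : LinearIndependent ℝ ((↑) : s → EuclideanSpace ℝ (Fin d))
  · exact ⟨s, subset_rfl, hli, c, hc, rfl⟩
  · -- get a nontrivial relation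
    rw [Fintype.linearIndependent_iff] at hli
    push_neg at hli
    obtain ⟨g, hgsum, i0, hgi0⟩ := hli
    set g' : EuclideanSpace ℝ (Fin d) → ℝ := fun v => if h : v ∈ s then g ⟨v, h⟩ else 0 with hg'
    have hg'sum : ∑ v ∈ s, g' v • v = 0 := by
      rw [← Finset.sum_attach s (fun v => g' v • v)]
      rw [← hgsum]
      rw [Finset.univ_eq_attach]
      exact Finset.sum_congr rfl (fun i _ => by simp [hg', i.2])
    have hg'ne : g' (↑i0) ≠ 0 := by simpa [hg', i0.2] using hgi0
    -- choose a relation with a positive coefficient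
    obtain ⟨e, hesum, v1, hv1s, hv1pos⟩ :
        ∃ e : EuclideanSpace ℝ (Fin d) → ℝ, (∑ v ∈ s, e v • v = 0) ∧
          ∃ v1 ∈ s, 0 < e v1 := by
      rcases lt_or_gt_of_ne hg'ne with h | h
      · refine ⟨fun v => -g' v, ?_, ↑i0, i0.2, by simpa using h⟩
        simp only [neg_smul, Finset.sum_neg_distrib, hg'sum, neg_zero]
      · exact ⟨g', hg'sum, ↑i0, i0.2, h⟩
    set T := s.filter (fun v => 0 < e v) with hT
    have hTne : T.Nonempty := ⟨v1, Finset.mem_filter.mpr ⟨hv1s, hv1pos⟩⟩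
    obtain ⟨v0, hv0T, hv0min⟩ := T.exists_mem_eq_inf' hTne (fun v => c v / e v)
    set r := T.inf' hTne (fun v => c v / e v) with hr
    have hv0s : v0 ∈ s := (Finset.mem_filter.mp hv0T).1
    have hv0pos : 0 < e v0 := (Finset.mem_filter.mp hv0T).2
    have hrnn : 0 ≤ r := by
      rw [hr]
      apply Finset.le_inf'
      intro v hv
      have hvs := Finset.mem_filter.mp hv
      exact div_nonneg (hc v hvs.1) hvs.2.le
    set c2 : EuclideanSpace ℝ (Fin d) → ℝ := fun v => c v - r * e v with hc2
    have hc2nn : ∀ v ∈ s, 0 ≤ c2 v := by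
      intro v hv
      rcases le_or_gt (e v) 0 with h | h
      · have h1 : r * e v ≤ 0 := mul_nonpos_of_nonneg_of_nonpos hrnn h
        simp only [hc2, sub_nonneg]
        exact h1.trans (hc v hv)
      · have hvT : v ∈ T := Finset.mem_filter.mpr ⟨hv, h⟩
        have h1 : r ≤ c v / e v := Finset.inf'_le _ hvT
        simp only [hc2, sub_nonneg]
        exact (le_div_iff₀ h).mp h1
    have hc2v0 : c2 v0 = 0 := by
      show c v0 - r * e v0 = 0
      rw [hv0min, div_mul_cancel₀ _ hv0pos.ne', sub_self]
    have hsum2 : ∑ v ∈ s, c2 v • v = ∑ v ∈ s, c v • v := by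
      simp only [hc2, sub_smul, Finset.sum_sub_distrib, mul_smul]
      rw [← Finset.smul_sum, hesum, smul_zero, sub_zero]
    have herase : ∑ v ∈ s.erase v0, c2 v • v = ∑ v ∈ s, c2 v • v :=
      Finset.sum_erase s (by rw [hc2v0, zero_smul])
    have hcard : (s.erase v0).card < n := by
      rw [← hn]
      exact Finset.card_erase_lt_of_mem hv0s
    obtain ⟨t, hts, hli', c3, hc3, hsum3⟩ :=
      ih (s.erase v0).card hcard (s.erase v0) rfl c2
        (fun v hv => hc2nn v (Finset.mem_of_mem_erase hv))
    exact ⟨t, hts.trans (Finset.erase_subset v0 s), hli', c3, hc3, by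
      rw [← hsum2, ← herase, hsum3]⟩

lemma isClosed_posHull_of_linearIndependent (s : Finset (EuclideanSpace ℝ (Fin d)))
    (hli : LinearIndependent ℝ ((↑) : s → EuclideanSpace ℝ (Fin d))) :
    IsClosed (posHull (s : Set (EuclideanSpace ℝ (Fin d)))) := by
  classical
  set φ : ({x // x ∈ s} → ℝ) →ₗ[ℝ] EuclideanSpace ℝ (Fin d) :=
    { toFun := fun c => ∑ i, c i • (i : EuclideanSpace ℝ (Fin d))
      map_add' := by
        intro a b
        simp [add_smul, Finset.sum_add_distrib]
      map_smul' := by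
        intro r a
        simp [mul_smul, Finset.smul_sum] } with hφ
  have hker : LinearMap.ker φ = ⊥ := by
    rw [LinearMap.ker_eq_bot']
    intro m hm
    have := Fintype.linearIndependent_iff.mp hli m hm
    funext i
    exact this i
  have hset : posHull (s : Set (EuclideanSpace ℝ (Fin d)))
      = φ '' {c | ∀ i, 0 ≤ c i} := by
    ext x
    constructor
    · intro hx
      obtain ⟨c, hc, rfl⟩ := mem_posHull_finset.mp hx
      refine ⟨fun i => c ↑i, fun i => hc _ i.2, ?_⟩
      show ∑ i : {x // x ∈ s}, c ↑i • (↑i : EuclideanSpace ℝ (Fin d)) = _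
      rw [Finset.univ_eq_attach, Finset.sum_attach s (fun v => c v • v)]
    · rintro ⟨c, hc, rfl⟩
      apply mem_posHull_finset.mpr
      refine ⟨fun v => if h : v ∈ s then c ⟨v, h⟩ else 0, ?_, ?_⟩
      · intro v hv; simp [hv]; exact hc _
      · show φ c = _
        have : ∑ v ∈ s, (if h : v ∈ s then c ⟨v, h⟩ else 0) • v
            = ∑ i ∈ s.attach, c i • (↑i : EuclideanSpace ℝ (Fin d)) := by
          rw [← Finset.sum_attach s (fun v => (if h : v ∈ s then c ⟨v, h⟩ else 0) • v)]
          exact Finset.sum_congr rfl (fun i _ => by simp [i.2])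
        rw [this]
        show ∑ i : {x // x ∈ s}, c i • (↑i : EuclideanSpace ℝ (Fin d)) = _
        rw [Finset.univ_eq_attach]
  rw [hset]
  have hclosed : IsClosed {c : {x // x ∈ s} → ℝ | ∀ i, 0 ≤ c i} := by
    have : {c : {x // x ∈ s} → ℝ | ∀ i, 0 ≤ c i} = ⋂ i, {c | 0 ≤ c i} := by
      ext c; simp
    rw [this]
    exact isClosed_iInter (fun i => isClosed_le continuous_const (continuous_apply i))
  exact (φ.isClosedEmbedding_of_injective hker).isClosedMap _ hclosed

lemma isClosed_posHull (A : Finset (EuclideanSpace ℝ (Fin d))) :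
    IsClosed (posHull (A : Set (EuclideanSpace ℝ (Fin d)))) := by
  classical
  have hset : posHull (A : Set (EuclideanSpace ℝ (Fin d))) =
      ⋃ t ∈ {t : Finset (EuclideanSpace ℝ (Fin d)) | t ⊆ A ∧
          LinearIndependent ℝ ((↑) : t → EuclideanSpace ℝ (Fin d))},
        posHull (t : Set (EuclideanSpace ℝ (Fin d))) := by
    ext x
    constructor
    · rintro ⟨s, c, hs, hc, rfl⟩
      obtain ⟨t, hts, hli, c', hc', hsum⟩ := carath s.card s rfl c hc
      refine Set.mem_biUnion ⟨hts.trans (Finset.coe_subset.mp hs), hli⟩ ?_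
      exact mem_posHull_finset.mpr ⟨c', hc', hsum⟩
    · intro hx
      obtain ⟨t, ht, hxt⟩ := Set.mem_iUnion₂.mp hx
      exact posHull_mono (Finset.coe_subset.mpr ht.1) hxt
  rw [hset]
  have hfin : {t : Finset (EuclideanSpace ℝ (Fin d)) | t ⊆ A ∧
      LinearIndependent ℝ ((↑) : t → EuclideanSpace ℝ (Fin d))}.Finite := by
    apply Set.Finite.subset A.powerset.finite_toSet
    intro t ht
    simpa using ht.1
  exact hfin.isClosed_biUnion (fun t ht => isClosed_posHull_of_linearIndependent t ht.2)

lemma zero_mem_posHull (V : Set (EuclideanSpace ℝ (Fin d))) : (0 : EuclideanSpace ℝ (Fin d)) ∈ posHull V :=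
  ⟨∅, 0, by simp, by simp, by simp⟩

lemma add_mem_posHull {A : Finset (EuclideanSpace ℝ (Fin d))} {x y : EuclideanSpace ℝ (Fin d)}
    (hx : x ∈ posHull (A : Set (EuclideanSpace ℝ (Fin d))))
    (hy : y ∈ posHull (A : Set (EuclideanSpace ℝ (Fin d)))) :
    x + y ∈ posHull (A : Set (EuclideanSpace ℝ (Fin d))) := by
  obtain ⟨c, hc, rfl⟩ := mem_posHull_finset.mp hx
  obtain ⟨c', hc', rfl⟩ := mem_posHull_finset.mp hy
  refine mem_posHull_finset.mpr ⟨fun v => c v + c' v, fun v hv => add_nonneg (hc v hv) (hc' v hv), ?_⟩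
  rw [← Finset.sum_add_distrib]
  exact Finset.sum_congr rfl (fun v _ => (add_smul _ _ _).symm)

lemma smul_mem_posHull {A : Finset (EuclideanSpace ℝ (Fin d))} {x : EuclideanSpace ℝ (Fin d)}
    {r : ℝ} (hr : 0 ≤ r) (hx : x ∈ posHull (A : Set (EuclideanSpace ℝ (Fin d)))) :
    r • x ∈ posHull (A : Set (EuclideanSpace ℝ (Fin d))) := by
  obtain ⟨c, hc, rfl⟩ := mem_posHull_finset.mp hx
  refine mem_posHull_finset.mpr ⟨fun v => r * c v, fun v hv => mul_nonneg hr (hc v hv), ?_⟩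
  rw [Finset.smul_sum]
  exact Finset.sum_congr rfl (fun v _ => (mul_smul _ _ _).symm)

/-- The convex cone `-(posHull A)`. -/
noncomputable def negCone (A : Finset (EuclideanSpace ℝ (Fin d))) : ConvexCone ℝ (EuclideanSpace ℝ (Fin d)) where
  carrier := -(posHull (A : Set (EuclideanSpace ℝ (Fin d))))
  smul_mem' := by
    intro r hr x hx
    rw [Set.mem_neg] at hx ⊢
    rw [← smul_neg]
    exact smul_mem_posHull hr.le hx
  add_mem' := by
    intro x hx y hy
    rw [Set.mem_neg] at hx hy ⊢
    rw [neg_add]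
    exact add_mem_posHull hx hy

/-- The inner dual cone of a set (port of the former Mathlib `Set.innerDualCone`). -/
noncomputable def _root_.Set.innerDualCone (s : Set (EuclideanSpace ℝ (Fin d))) :
    ConvexCone ℝ (EuclideanSpace ℝ (Fin d)) where
  carrier := {y | ∀ x ∈ s, 0 ≤ ⟪x, y⟫}
  smul_mem' := by
    intro c hc y hy x hx
    rw [real_inner_smul_right]
    exact mul_nonneg hc.le (hy x hx)
  add_mem' := by
    intro u hu v hv x hx
    rw [inner_add_right]
    exact add_nonneg (hu x hx) (hv x hx)

theorem mem_innerDualCone (y : EuclideanSpace ℝ (Fin d)) (s : Set (EuclideanSpace ℝ (Fin d))) :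
    y ∈ s.innerDualCone ↔ ∀ x ∈ s, 0 ≤ ⟪x, y⟫ := Iff.rfl

theorem _root_.ConvexCone.innerDualCone_of_innerDualCone_eq_self
    (K : ConvexCone ℝ (EuclideanSpace ℝ (Fin d)))
    (ne : (K : Set (EuclideanSpace ℝ (Fin d))).Nonempty)
    (hc : IsClosed (K : Set (EuclideanSpace ℝ (Fin d)))) :
    ((K : Set (EuclideanSpace ℝ (Fin d))).innerDualCone :
      Set (EuclideanSpace ℝ (Fin d))).innerDualCone = K := by
  have h0 : (0 : EuclideanSpace ℝ (Fin d)) ∈ K := by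
    obtain ⟨x, hx⟩ := ne
    have ht : Filter.Tendsto (fun t : ℝ => t • x) (nhdsWithin 0 (Set.Ioi 0)) (nhds 0) := by
      have : Filter.Tendsto (fun t : ℝ => t • x) (nhds 0) (nhds ((0 : ℝ) • x)) :=
        (continuous_id.smul continuous_const).tendsto 0
      rw [zero_smul] at this
      exact this.mono_left nhdsWithin_le_nhds
    exact hc.mem_of_tendsto ht
      (eventually_mem_nhdsWithin.mono (fun t (htp : (0 : ℝ) < t) => K.smul_mem htp hx))
  let C : ProperCone ℝ (EuclideanSpace ℝ (Fin d)) :=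
    { carrier := (K : Set (EuclideanSpace ℝ (Fin d)))
      add_mem' := fun ha hb => K.add_mem ha hb
      zero_mem' := h0
      smul_mem' := by
        intro c x hx
        rcases eq_or_lt_of_le c.2 with h | h
        · have : c = 0 := NNReal.eq h.symm
          subst this
          simpa using h0
        · have : (c • x : EuclideanSpace ℝ (Fin d)) = (c : ℝ) • x := rfl
          rw [this]
          exact K.smul_mem h hx
      isClosed' := hc }
  ext x
  constructor
  · intro hx
    by_contra hxK
    obtain ⟨y, hy, hxy⟩ := ProperCone.hyperplane_separation' C (x₀ := x) hxK
    have hyd : y ∈ (K : Set (EuclideanSpace ℝ (Fin d))).innerDualCone := fun z hz => hy z hz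
    have := hx y hyd
    rw [real_inner_comm] at this
    linarith
  · intro hx y hy
    rw [real_inner_comm]
    exact hy x hx

end PolarAux

open PolarAux in
/-- With `K = pos A`, `L = lpos A`, and `pr A` the orthogonal projection of `A` to `L^⊥`,
the polar cone `K°` equals `L^⊥ ∩ (pos (pr A))°`, and `K°` spans `L^⊥` (i.e. is
full-dimensional in `L^⊥`). -/
theorem polar_cone_decomposition (d : ℕ) (A : Finset (EuclideanSpace ℝ (Fin d))) :
    {x : EuclideanSpace ℝ (Fin d) |
        ∀ a ∈ posHull (A : Set (EuclideanSpace ℝ (Fin d))), ⟪a, x⟫ ≤ 0} =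
      (((Submodule.span ℝ (linealitySet (A : Set (EuclideanSpace ℝ (Fin d)))))ᗮ :
          Submodule ℝ (EuclideanSpace ℝ (Fin d))) : Set (EuclideanSpace ℝ (Fin d))) ∩
        {x : EuclideanSpace ℝ (Fin d) | ∀ b ∈ posHull
            ((fun a => ((Submodule.orthogonalProjectionOnto
                (Submodule.span ℝ (linealitySet (A : Set (EuclideanSpace ℝ (Fin d)))))ᗮ a :
              (Submodule.span ℝ (linealitySet (A : Set (EuclideanSpace ℝ (Fin d)))))ᗮ) :
                EuclideanSpace ℝ (Fin d))) '' (A : Set (EuclideanSpace ℝ (Fin d)))),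
          ⟪b, x⟫ ≤ 0} ∧
    Submodule.span ℝ {x : EuclideanSpace ℝ (Fin d) |
        ∀ a ∈ posHull (A : Set (EuclideanSpace ℝ (Fin d))), ⟪a, x⟫ ≤ 0} =
      (Submodule.span ℝ (linealitySet (A : Set (EuclideanSpace ℝ (Fin d)))))ᗮ := by
  classical
  set S : Submodule ℝ (EuclideanSpace ℝ (Fin d)) :=
    Submodule.span ℝ (linealitySet (A : Set (EuclideanSpace ℝ (Fin d)))) with hS
  set P : Set (EuclideanSpace ℝ (Fin d)) :=
    {x : EuclideanSpace ℝ (Fin d) |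
      ∀ a ∈ posHull (A : Set (EuclideanSpace ℝ (Fin d))), ⟪a, x⟫ ≤ 0} with hP
  have hPgen : ∀ x : EuclideanSpace ℝ (Fin d),
      (∀ a ∈ (A : Set (EuclideanSpace ℝ (Fin d))), ⟪a, x⟫ ≤ 0) → x ∈ P := by
    intro x hx
    exact (Set.ext_iff.mp (polar_posHull_eq (A : Set (EuclideanSpace ℝ (Fin d)))) x).mpr hx
  -- P ⊆ Sᗮ
  have hPS : ∀ x ∈ P, x ∈ Sᗮ := by
    intro x hx
    rw [Submodule.mem_orthogonal]
    intro u hu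
    induction hu using Submodule.span_induction with
    | mem u hu =>
      obtain ⟨hu1, hu2⟩ := hu
      rw [Set.mem_neg] at hu2
      have h1 : ⟪u, x⟫ ≤ 0 := hx u hu1
      have h2 : ⟪-u, x⟫ ≤ 0 := hx (-u) hu2
      rw [inner_neg_left, neg_nonpos] at h2
      exact le_antisymm h1 h2
    | zero => exact inner_zero_left x
    | add u v _ _ hu hv => rw [inner_add_left, hu, hv, add_zero]
    | smul r u _ hu => rw [real_inner_smul_left, hu, mul_zero]
  -- inner products with projections
  have hinner : ∀ (a x : EuclideanSpace ℝ (Fin d)), x ∈ Sᗮ →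
      ⟪((Sᗮ.orthogonalProjectionOnto a : Sᗮ) : EuclideanSpace ℝ (Fin d)), x⟫ = ⟪a, x⟫ := by
    intro a x hx
    conv_rhs => rw [← S.starProjection_add_starProjection_orthogonal a]
    rw [inner_add_left, Submodule.starProjection_apply, Submodule.starProjection_apply,
      Submodule.inner_right_of_mem_orthogonal (S.orthogonalProjectionOnto a).2 hx, zero_add]
  -- part 1
  have part1 : P = (Sᗮ : Set (EuclideanSpace ℝ (Fin d))) ∩
      {x : EuclideanSpace ℝ (Fin d) | ∀ b ∈ posHull
          ((fun a => ((Sᗮ.orthogonalProjectionOnto a : Sᗮ) : EuclideanSpace ℝ (Fin d))) ''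
            (A : Set (EuclideanSpace ℝ (Fin d)))), ⟪b, x⟫ ≤ 0} := by
    ext x
    constructor
    · intro hx
      have hxS : x ∈ Sᗮ := hPS x hx
      refine ⟨hxS, ?_⟩
      intro b hb
      have hgen : ∀ b ∈ ((fun a => ((Sᗮ.orthogonalProjectionOnto a : Sᗮ) :
          EuclideanSpace ℝ (Fin d))) '' (A : Set (EuclideanSpace ℝ (Fin d)))),
          ⟪b, x⟫ ≤ 0 := by
        rintro b ⟨a, ha, rfl⟩
        rw [hinner a x hxS]
        exact hx a (subset_posHull _ ha)
      exact (Set.ext_iff.mp (polar_posHull_eq _) x).mpr hgen b hb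
    · rintro ⟨hxS, hximg⟩
      refine hPgen x ?_
      intro a ha
      rw [← hinner a x hxS]
      exact hximg _ (subset_posHull _ ⟨a, ha, rfl⟩)
  refine ⟨part1, ?_⟩
  -- part 2
  apply le_antisymm
  · rw [Submodule.span_le]
    intro x hx
    exact hPS x hx
  · -- bipolar argument
    have hKclosed : IsClosed (posHull (A : Set (EuclideanSpace ℝ (Fin d)))) := isClosed_posHull A
    have hne : ((negCone A : ConvexCone ℝ (EuclideanSpace ℝ (Fin d))) :
        Set (EuclideanSpace ℝ (Fin d))).Nonempty := by
      refine ⟨0, ?_⟩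
      show (0 : EuclideanSpace ℝ (Fin d)) ∈ -(posHull (A : Set (EuclideanSpace ℝ (Fin d))))
      rw [Set.mem_neg, neg_zero]
      exact zero_mem_posHull _
    have hncl : IsClosed ((negCone A : ConvexCone ℝ (EuclideanSpace ℝ (Fin d))) :
        Set (EuclideanSpace ℝ (Fin d))) := by
      show IsClosed (-(posHull (A : Set (EuclideanSpace ℝ (Fin d)))))
      exact hKclosed.neg
    have hbi := (negCone A).innerDualCone_of_innerDualCone_eq_self hne hncl
    have hPdual : P = (((negCone A : ConvexCone ℝ (EuclideanSpace ℝ (Fin d))) :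
        Set (EuclideanSpace ℝ (Fin d))).innerDualCone : Set (EuclideanSpace ℝ (Fin d))) := by
      ext x
      rw [SetLike.mem_coe, mem_innerDualCone]
      constructor
      · intro hx u hu
        have hu' : -u ∈ posHull (A : Set (EuclideanSpace ℝ (Fin d))) := hu
        have h1 := hx (-u) hu'
        rw [inner_neg_left, neg_nonpos] at h1
        exact h1
      · intro hx a ha
        have hma : -a ∈ ((negCone A : ConvexCone ℝ (EuclideanSpace ℝ (Fin d))) :
            Set (EuclideanSpace ℝ (Fin d))) := by
          show -a ∈ -(posHull (A : Set (EuclideanSpace ℝ (Fin d))))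
          rw [Set.mem_neg, neg_neg]
          exact ha
        have h1 := hx (-a) hma
        rw [inner_neg_left] at h1
        linarith
    have key : (Submodule.span ℝ P)ᗮ ≤ S := by
      intro y hy
      rw [Submodule.mem_orthogonal] at hy
      have hy0 : ∀ x ∈ P, ⟪x, y⟫ = 0 := fun x hx => hy x (Submodule.subset_span hx)
      have hy1 : y ∈ (P.innerDualCone : Set (EuclideanSpace ℝ (Fin d))) := by
        rw [SetLike.mem_coe, mem_innerDualCone]
        intro x hx; rw [hy0 x hx]
      have hy2 : -y ∈ (P.innerDualCone : Set (EuclideanSpace ℝ (Fin d))) := by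
        rw [SetLike.mem_coe, mem_innerDualCone]
        intro x hx; rw [inner_neg_right, hy0 x hx, neg_zero]
      rw [hPdual] at hy1 hy2
      rw [SetLike.mem_coe, SetLike.ext_iff.mp hbi y] at hy1
      rw [SetLike.mem_coe, SetLike.ext_iff.mp hbi (-y)] at hy2
      have hyK : y ∈ posHull (A : Set (EuclideanSpace ℝ (Fin d))) := by
        have h2 : -y ∈ -(posHull (A : Set (EuclideanSpace ℝ (Fin d)))) := hy2
        rw [Set.mem_neg, neg_neg] at h2
        exact h2
      have hymK : y ∈ -(posHull (A : Set (EuclideanSpace ℝ (Fin d)))) := hy1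
      exact Submodule.subset_span ⟨hyK, hymK⟩
    calc Sᗮ ≤ ((Submodule.span ℝ P)ᗮ)ᗮ := Submodule.orthogonal_le key
    _ = Submodule.span ℝ P := Submodule.orthogonal_orthogonal _
end

section
/- Let A ⊆ ℝ^d be a finite set of nonzero vectors and k ∈ [d]. The solution set {x ∈ ℝ^d : a·x ≤ 0 for all a ∈ A} contains a k-dimensional cone (with apex 0) if and only if dim lpos A ≤ d − k. -/
open scoped RealInnerProductSpace

abbrev Euc (d : ℕ) := EuclideanSpace ℝ (Fin d)

lemma posHull_char {d : ℕ} (A : Finset (Euc d)) (x : Euc d) :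
    x ∈ posHull (A : Set (Euc d)) ↔
      ∃ c : Euc d → ℝ, (∀ a ∈ A, 0 ≤ c a) ∧ x = ∑ a ∈ A, c a • a := by
  constructor
  · rintro ⟨s, c, hs, hc, rfl⟩
    classical
    refine ⟨fun v => if v ∈ s then c v else 0, fun a _ => ?_, ?_⟩
    · dsimp only; split
      · exact hc _ ‹_›
      · exact le_rfl
    · dsimp only
      rw [← Finset.sum_subset (Finset.coe_subset.mp hs)
        (fun v _ hvs => by simp [hvs])]
      exact Finset.sum_congr rfl fun v hv => by simp [hv]
  · rintro ⟨c, hc, rfl⟩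
    exact ⟨A, c, subset_rfl, hc, rfl⟩

lemma mem_posHull_self {d : ℕ} {A : Finset (Euc d)} {a : Euc d} (ha : a ∈ A) :
    a ∈ posHull (A : Set (Euc d)) := by
  refine ⟨{a}, fun _ => 1, by simpa using ha, fun _ _ => zero_le_one, by simp⟩

lemma posHull_add {d : ℕ} {A : Finset (Euc d)} {x y : Euc d}
    (hx : x ∈ posHull (A : Set (Euc d))) (hy : y ∈ posHull (A : Set (Euc d))) :
    x + y ∈ posHull (A : Set (Euc d)) := by
  rw [posHull_char] at *
  obtain ⟨c, hc, rfl⟩ := hx; obtain ⟨c', hc', rfl⟩ := hy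
  exact ⟨c + c', fun a ha => add_nonneg (hc a ha) (hc' a ha), by
    simp [add_smul, Finset.sum_add_distrib]⟩

lemma posHull_smul {d : ℕ} {A : Finset (Euc d)} {x : Euc d} {t : ℝ} (ht : 0 ≤ t)
    (hx : x ∈ posHull (A : Set (Euc d))) : t • x ∈ posHull (A : Set (Euc d)) := by
  rw [posHull_char] at *
  obtain ⟨c, hc, rfl⟩ := hx
  exact ⟨fun a => t * c a, fun a ha => mul_nonneg ht (hc a ha), by
    simp [Finset.smul_sum, mul_smul]⟩

lemma posHull_zero {d : ℕ} {A : Finset (Euc d)} : (0 : Euc d) ∈ posHull (A : Set (Euc d)) :=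
  ⟨∅, 0, by simp, by simp, by simp⟩

/-- the lineality set as a submodule -/
def linealitySub {d : ℕ} (A : Finset (Euc d)) : Submodule ℝ (Euc d) where
  carrier := linealitySet (A : Set (Euc d))
  zero_mem' := ⟨posHull_zero, by simpa using posHull_zero (A := A)⟩
  add_mem' := by
    rintro x y ⟨hx1, hx2⟩ ⟨hy1, hy2⟩
    rw [Set.mem_neg] at hx2 hy2
    exact ⟨posHull_add hx1 hy1, by rw [Set.mem_neg, neg_add]; exact posHull_add hx2 hy2⟩
  smul_mem' := by
    rintro t x ⟨hx1, hx2⟩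
    rw [Set.mem_neg] at hx2
    rcases le_or_gt 0 t with ht | ht
    · exact ⟨posHull_smul ht hx1, by
        rw [Set.mem_neg, ← smul_neg]; exact posHull_smul ht hx2⟩
    · have e1 : t • x = (-t) • (-x) := by rw [neg_smul, smul_neg, neg_neg]
      refine ⟨by rw [e1]; exact posHull_smul (by linarith) hx2, ?_⟩
      rw [Set.mem_neg, ← neg_smul]
      exact posHull_smul (by linarith) hx1

lemma span_lineality {d : ℕ} (A : Finset (Euc d)) :
    Submodule.span ℝ (linealitySet (A : Set (Euc d))) = linealitySub A :=
  Submodule.span_eq (linealitySub A)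

def solSet {d : ℕ} (A : Finset (Euc d)) : Set (Euc d) := {x | ∀ a ∈ A, ⟪a, x⟫ ≤ 0}

lemma solSet_subset_orth {d : ℕ} (A : Finset (Euc d)) :
    solSet A ⊆ ((linealitySub A)ᗮ : Set (Euc d)) := by
  intro x hx
  rw [SetLike.mem_coe, Submodule.mem_orthogonal]
  rintro y ⟨hy1, hy2⟩
  rw [Set.mem_neg] at hy2
  have key : ∀ z : Euc d, z ∈ posHull (A : Set (Euc d)) → ⟪z, x⟫ ≤ 0 := by
    intro z hz
    rw [posHull_char] at hz
    obtain ⟨c, hc, rfl⟩ := hz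
    rw [sum_inner]
    refine Finset.sum_nonpos fun a ha => ?_
    rw [real_inner_smul_left]
    exact mul_nonpos_of_nonneg_of_nonpos (hc a ha) (hx a ha)
  have h1 := key y hy1
  have h2 := key (-y) hy2
  rw [inner_neg_left] at h2
  linarith

lemma posHull_sum {d : ℕ} {A : Finset (Euc d)} {ι : Type*} (s : Finset ι) (f : ι → Euc d)
    (hf : ∀ i ∈ s, f i ∈ posHull (A : Set (Euc d))) :
    ∑ i ∈ s, f i ∈ posHull (A : Set (Euc d)) :=
  Finset.sum_induction f _ (fun _ _ => posHull_add) posHull_zero hf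

lemma orth_subset_span_sol {d : ℕ} (A : Finset (Euc d)) :
    ((linealitySub A)ᗮ : Set (Euc d)) ⊆ (Submodule.span ℝ (solSet A) : Set (Euc d)) := by
  classical
  set L := linealitySub A with hL
  set W := Lᗮ with hW
  set p : Euc d → Euc d := fun x => (W.orthogonalProjectionOnto x : Euc d) with hp
  have hpW : ∀ x, p x ∈ W := fun x => (W.orthogonalProjectionOnto x).2
  have hker : ∀ a, p a = 0 ↔ a ∈ L := by
    intro a
    rw [hp]
    simp only [ZeroMemClass.coe_eq_zero]
    rw [Submodule.orthogonalProjectionOnto_eq_zero_iff, hW, Submodule.orthogonal_orthogonal]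
  have hinner : ∀ a : Euc d, ∀ x ∈ W, ⟪a, x⟫ = ⟪p a, x⟫ := by
    intro a x hxW
    have h1 : ⟪a - p a, x⟫ = 0 := by
      have := Submodule.sub_starProjection_mem_orthogonal (K := W) a
      exact (Submodule.mem_orthogonal' _ _).mp this x hxW
    rw [inner_sub_left] at h1
    linarith
  by_cases hall : ∀ a ∈ A, p a = 0
  · -- every a is in L; W ⊆ solSet
    intro x hxW
    refine Submodule.subset_span ?_
    intro a ha
    have haL : a ∈ L := (hker a).mp (hall a ha)
    have : ⟪a, x⟫ = 0 := (Submodule.mem_orthogonal L x).mp hxW a haL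
    exact le_of_eq this
  · push_neg at hall
    obtain ⟨a₀, ha₀A, ha₀⟩ := hall
    set B : Finset (Euc d) := (A.image p).filter (· ≠ 0) with hB
    have hBne : B.Nonempty := ⟨p a₀, by
      rw [hB, Finset.mem_filter]
      exact ⟨Finset.mem_image_of_mem p ha₀A, ha₀⟩⟩
    have hBmem : ∀ b ∈ B, (∃ a ∈ A, p a = b) ∧ b ≠ 0 := by
      intro b hb
      rw [hB, Finset.mem_filter, Finset.mem_image] at hb
      exact hb
    -- 0 is not in the convex hull of B
    have h0K : (0 : Euc d) ∉ convexHull ℝ (B : Set (Euc d)) := by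
      intro h0
      rw [Finset.convexHull_eq] at h0
      obtain ⟨w, hw0, hw1, hwc⟩ := h0
      rw [Finset.centerMass_eq_of_sum_1 _ _ hw1] at hwc
      simp only [id] at hwc
      -- find b₀ with positive weight
      have hex : ∃ b₀ ∈ B, 0 < w b₀ := by
        by_contra hno
        push_neg at hno
        have : ∑ b ∈ B, w b = 0 :=
          Finset.sum_eq_zero fun b hb => le_antisymm (hno b hb) (hw0 b hb)
        rw [hw1] at this; norm_num at this
      obtain ⟨b₀, hb₀B, hb₀w⟩ := hex
      -- choose preimages
      have hpre : ∀ b : {x // x ∈ B}, ∃ a ∈ A, p a = (b : Euc d) :=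
        fun b => (hBmem b b.2).1
      choose g hgA hgp using hpre
      set u : Euc d := ∑ b ∈ B.attach, w (b : Euc d) • g b with hu
      have hpu : p u = 0 := by
        have hlin : ∀ (s : Finset {x // x ∈ B}),
            p (∑ b ∈ s, w (b : Euc d) • g b) = ∑ b ∈ s, w (b : Euc d) • p (g b) := by
          intro s
          rw [hp]
          push_cast [map_sum, map_smul]
          rfl
        rw [hu, hlin]
        have : ∑ b ∈ B.attach, w (b : Euc d) • p (g b)
            = ∑ b ∈ B.attach, w (b : Euc d) • (b : Euc d) :=
          Finset.sum_congr rfl fun b _ => by rw [hgp]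
        rw [this]
        rw [Finset.sum_attach B (fun b => w b • b)]
        exact hwc
      have huL : u ∈ L := (hker u).mp hpu
      have hnegu : -u ∈ posHull (A : Set (Euc d)) := by
        have := huL.2; rwa [Set.mem_neg] at this
      set b₀' : {x // x ∈ B} := ⟨b₀, hb₀B⟩ with hb₀'
      have hsplit : u = w b₀ • g b₀' + ∑ b ∈ B.attach.erase b₀', w (b : Euc d) • g b := by
        rw [hu, ← Finset.add_sum_erase _ _ (Finset.mem_attach B b₀')]
      have hrest : ∑ b ∈ B.attach.erase b₀', w (b : Euc d) • g b ∈ posHull (A : Set (Euc d)) := by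
        refine posHull_sum _ _ fun b hb => ?_
        exact posHull_smul (hw0 _ b.2) (mem_posHull_self (hgA b))
      have hneg : -(w b₀ • g b₀') ∈ posHull (A : Set (Euc d)) := by
        have : -(w b₀ • g b₀') = -u + ∑ b ∈ B.attach.erase b₀', w (b : Euc d) • g b := by
          rw [hsplit]; abel
        rw [this]
        exact posHull_add hnegu hrest
      have hgb₀neg : -(g b₀') ∈ posHull (A : Set (Euc d)) := by
        have : -(g b₀') = (w b₀)⁻¹ • (-(w b₀ • g b₀')) := by
          rw [smul_neg, smul_smul, inv_mul_cancel₀ hb₀w.ne', one_smul]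
        rw [this]
        exact posHull_smul (by positivity) hneg
      have hgb₀L : g b₀' ∈ L := by
        refine ⟨mem_posHull_self (hgA b₀'), ?_⟩
        rwa [Set.mem_neg]
      have : p (g b₀') = 0 := (hker _).mpr hgb₀L
      rw [hgp b₀'] at this
      exact (hBmem b₀ hb₀B).2 this
    -- separate
    obtain ⟨f, c, hfc, hcb⟩ := geometric_hahn_banach_point_closed
      (convex_convexHull ℝ (B : Set (Euc d)))
      ((B.finite_toSet.isCompact_convexHull ℝ).isClosed) h0K
    rw [map_zero] at hfc
    set z : Euc d := (InnerProductSpace.toDual ℝ (Euc d)).symm f with hz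
    have hzf : ∀ y : Euc d, ⟪z, y⟫ = f y := fun y => InnerProductSpace.toDual_symm_apply
    set x₀ : Euc d := -(p z) with hx₀
    have hx₀W : x₀ ∈ W := neg_mem (hpW z)
    have hkey : ∀ a ∈ A, p a ≠ 0 → ⟪a, x₀⟫ < 0 := by
      intro a haA hpa
      have h1 : ⟪a, x₀⟫ = ⟪p a, x₀⟫ := hinner a x₀ hx₀W
      have h2 : ⟪p a, p z⟫ = ⟪p a, z⟫ := by
        have hzo : ⟪p a, z - p z⟫ = 0 := by
          rw [real_inner_comm]
          exact (Submodule.mem_orthogonal' _ _).mp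
            (Submodule.sub_starProjection_mem_orthogonal (K := W) z) (p a) (hpW a)
        rw [inner_sub_right] at hzo
        linarith
      have hmem : p a ∈ B := by
        rw [hB, Finset.mem_filter]
        exact ⟨Finset.mem_image_of_mem p haA, hpa⟩
      have h3 : c < f (p a) := hcb _ (subset_convexHull ℝ _ hmem)
      have h4 : 0 < f (p a) := lt_trans hfc h3
      rw [← hzf] at h4
      rw [h1, hx₀, inner_neg_right, h2, real_inner_comm]
      linarith
    have hzero : ∀ a ∈ A, p a = 0 → ∀ x ∈ W, ⟪a, x⟫ = 0 := by
      intro a _ hpa x hxW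
      exact (Submodule.mem_orthogonal L x).mp hxW a ((hker a).mp hpa)
    have hx₀S : x₀ ∈ solSet A := by
      intro a haA
      by_cases hpa : p a = 0
      · exact le_of_eq (hzero a haA hpa x₀ hx₀W)
      · exact le_of_lt (hkey a haA hpa)
    -- now show W ⊆ span solSet
    intro x hxW
    set N : Finset (Euc d) := A.filter (fun a => p a ≠ 0) with hN
    have hNne : N.Nonempty := ⟨a₀, by rw [hN, Finset.mem_filter]; exact ⟨ha₀A, ha₀⟩⟩
    set ε : ℝ := N.inf' hNne (fun a => (-⟪a, x₀⟫) / (|⟪a, x⟫| + 1)) with hε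
    have hεpos : 0 < ε := by
      rw [hε, Finset.lt_inf'_iff]
      intro a ha
      rw [hN, Finset.mem_filter] at ha
      exact div_pos (by linarith [hkey a ha.1 ha.2]) (by positivity)
    have hxεS : x₀ + ε • x ∈ solSet A := by
      intro a haA
      rw [inner_add_right, real_inner_smul_right]
      by_cases hpa : p a = 0
      · rw [hzero a haA hpa x₀ hx₀W, hzero a haA hpa x hxW]; simp
      · have haN : a ∈ N := by rw [hN, Finset.mem_filter]; exact ⟨haA, hpa⟩
        have hle : ε ≤ (-⟪a, x₀⟫) / (|⟪a, x⟫| + 1) := Finset.inf'_le _ haN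
        have hpos : (0:ℝ) < |⟪a, x⟫| + 1 := by positivity
        rw [le_div_iff₀ hpos] at hle
        nlinarith [le_abs_self ⟪a, x⟫, abs_nonneg ⟪a, x⟫]
    have hx1 : x₀ ∈ Submodule.span ℝ (solSet A) := Submodule.subset_span hx₀S
    have hx2 : x₀ + ε • x ∈ Submodule.span ℝ (solSet A) := Submodule.subset_span hxεS
    have : x = ε⁻¹ • ((x₀ + ε • x) - x₀) := by
      rw [add_sub_cancel_left, smul_smul, inv_mul_cancel₀ hεpos.ne', one_smul]
    rw [SetLike.mem_coe, this]
    exact Submodule.smul_mem _ _ (Submodule.sub_mem _ hx2 hx1)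

lemma span_solSet {d : ℕ} (A : Finset (Euc d)) :
    Submodule.span ℝ (solSet A) = (linealitySub A)ᗮ := by
  refine le_antisymm (Submodule.span_le.mpr (solSet_subset_orth A)) ?_
  intro x hx
  exact orth_subset_span_sol A hx

lemma posHull_subset_solSet {d : ℕ} {A : Finset (Euc d)} {V : Set (Euc d)}
    (hV : V ⊆ solSet A) : posHull V ⊆ solSet A := by
  rintro x ⟨s, c, hs, hc, rfl⟩ a ha
  rw [inner_sum]
  refine Finset.sum_nonpos fun v hv => ?_
  rw [real_inner_smul_right]
  exact mul_nonpos_of_nonneg_of_nonpos (hc v hv) (hV (hs hv) a ha)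

lemma self_subset_posHull {d : ℕ} (V : Set (Euc d)) : V ⊆ posHull V := by
  intro v hv
  exact ⟨{v}, fun _ => 1, by simpa using hv, fun _ _ => zero_le_one, by simp⟩

lemma rank_sum {d : ℕ} (A : Finset (EuclideanSpace ℝ (Fin d))) :
    Module.finrank ℝ (Submodule.span ℝ (linealitySet (A : Set (EuclideanSpace ℝ (Fin d)))))
      + Module.finrank ℝ (Submodule.span ℝ (solSet A)) = d := by
  rw [span_lineality, span_solSet, Submodule.finrank_add_finrank_orthogonal,
    finrank_euclideanSpace]
  simp

/-- The solution set of `a·x ≤ 0, a ∈ A` contains a `k`-dimensional cone with apex `0`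
iff `dim lpos A ≤ d - k`. -/
theorem solution_cone_iff_lineality (d k : ℕ) (hk1 : 1 ≤ k) (hkd : k ≤ d)
    (A : Finset (EuclideanSpace ℝ (Fin d))) (hA : ∀ a ∈ A, a ≠ 0) :
    (∃ V : Set (EuclideanSpace ℝ (Fin d)),
        Module.finrank ℝ (Submodule.span ℝ V) = k ∧
          posHull V ⊆ {x : EuclideanSpace ℝ (Fin d) | ∀ a ∈ A, ⟪a, x⟫ ≤ 0}) ↔
      Module.finrank ℝ
        (Submodule.span ℝ (linealitySet (A : Set (EuclideanSpace ℝ (Fin d))))) ≤ d - k := by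
  have hSsol : {x : EuclideanSpace ℝ (Fin d) | ∀ a ∈ A, ⟪a, x⟫ ≤ 0} = solSet A := rfl
  have hdim := rank_sum A
  constructor
  · rintro ⟨V, hVrank, hVsub⟩
    rw [hSsol] at hVsub
    have hVS : V ⊆ solSet A := (self_subset_posHull V).trans hVsub
    have hle : Submodule.span ℝ V ≤ Submodule.span ℝ (solSet A) := Submodule.span_mono hVS
    have h1 : k ≤ Module.finrank ℝ (Submodule.span ℝ (solSet A)) :=
      hVrank ▸ Submodule.finrank_mono hle
    omega
  · intro h
    have h1 : k ≤ Module.finrank ℝ (Submodule.span ℝ (solSet A)) := by omega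
    obtain ⟨b, hbS, hbspan, hbli⟩ := exists_linearIndependent ℝ (solSet A)
    have hbfin : b.Finite := hbli.setFinite
    have hco : (hbfin.toFinset : Set (EuclideanSpace ℝ (Fin d))) = b := hbfin.coe_toFinset
    have hcard : k ≤ hbfin.toFinset.card := by
      have h2 : Module.finrank ℝ (Submodule.span ℝ b) = hbfin.toFinset.card := by
        conv_lhs => rw [← hco]
        exact finrank_span_finset_eq_card (hbli.linearIndepOn_id.mono (hco.subset.trans Subtype.range_coe.symm.subset))
      rw [hbspan] at h2
      omega
    obtain ⟨t, hts, htcard⟩ := Finset.exists_subset_card_eq hcard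
    have htb : (t : Set (EuclideanSpace ℝ (Fin d))) ⊆ b := by
      intro v hv
      exact hbfin.mem_toFinset.mp (hts hv)
    refine ⟨(t : Set (EuclideanSpace ℝ (Fin d))), ?_, ?_⟩
    · rw [← htcard]
      exact finrank_span_finset_eq_card (hbli.linearIndepOn_id.mono (htb.trans Subtype.range_coe.symm.subset))
    · rw [hSsol]
      exact posHull_subset_solSet (htb.trans hbS)
end

section
/- Let A be a finite set of nonzero vectors in ℝ^d and k ∈ [d]. The intersection of the halfspaces {x : a·x ≤ 0}, a ∈ A, contains a (d−k)-dimensional linear subspace for every choice of at most k+1 of these halfspaces if and only if every subset of A of size k+1 is linearly dependent, i.e., dim span A ≤ k; and in that case the intersection over all a ∈ A contains a (d−k)-dimensional linear subspace, namely (span A)^⊥. -/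
open scoped RealInnerProductSpace

open Module Submodule

private lemma exists_sub_finrank {V : Type*} [NormedAddCommGroup V] [InnerProductSpace ℝ V]
    [FiniteDimensional ℝ V] (K : Submodule ℝ V) (m : ℕ) (hm : m ≤ finrank ℝ K) :
    ∃ S : Submodule ℝ V, S ≤ K ∧ finrank ℝ S = m := by
  classical
  let b := finBasis ℝ K
  let f : Fin m → V := fun i => (b (Fin.castLE hm i) : V)
  have hf : LinearIndependent ℝ f := by
    have h1 : LinearIndependent ℝ (fun i : Fin m => b (Fin.castLE hm i)) :=
      b.linearIndependent.comp _ (Fin.castLE_injective hm)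
    exact h1.map' K.subtype K.ker_subtype
  refine ⟨Submodule.span ℝ (Set.range f), ?_, ?_⟩
  · rw [Submodule.span_le]
    rintro _ ⟨i, rfl⟩
    exact (b (Fin.castLE hm i)).2
  · simpa using finrank_span_eq_card hf

private lemma mem_orth_of_halfspaces {V : Type*} [NormedAddCommGroup V] [InnerProductSpace ℝ V]
    (B : Finset V) (S : Submodule ℝ V)
    (hS : (S : Set V) ⊆ ⋂ a ∈ B, {x : V | ⟪a, x⟫ ≤ 0}) :
    S ≤ (Submodule.span ℝ (B : Set V))ᗮ := by
  intro x hx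
  have hspan : Submodule.span ℝ (B : Set V) ≤ (ℝ ∙ x)ᗮ := by
    rw [Submodule.span_le]
    intro a ha
    rw [SetLike.mem_coe, Submodule.mem_orthogonal_singleton_iff_inner_right]
    have h1 : ⟪a, x⟫ ≤ 0 := by
      have := hS hx; simp only [Set.mem_iInter] at this; exact this a ha
    have h2 : ⟪a, -x⟫ ≤ 0 := by
      have := hS (S.neg_mem hx); simp only [Set.mem_iInter] at this; exact this a ha
    rw [inner_neg_right] at h2
    rw [real_inner_comm]
    linarith
  have := Submodule.orthogonal_le hspan
  exact this (Submodule.le_orthogonal_orthogonal _ (Submodule.mem_span_singleton_self x))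

/-- Key step in the proof of de Santis's theorem for homogeneous halfspaces: every
`(k+1)`-subfamily intersection contains a `(d-k)`-dimensional subspace iff
`dim span A ≤ k`, in which case `(span A)ᗮ` is such a subspace for the whole family. -/
theorem deSantis_halfspace_step (d k : ℕ) (hk1 : 1 ≤ k) (hkd : k ≤ d)
    (A : Finset (EuclideanSpace ℝ (Fin d))) (hA : ∀ a ∈ A, a ≠ 0) :
    ((∀ B ⊆ A, B.card ≤ k + 1 →
        ∃ S : Submodule ℝ (EuclideanSpace ℝ (Fin d)), Module.finrank ℝ S = d - k ∧
          (S : Set (EuclideanSpace ℝ (Fin d))) ⊆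
            ⋂ a ∈ B, {x : EuclideanSpace ℝ (Fin d) | ⟪a, x⟫ ≤ 0}) ↔
      Module.finrank ℝ (Submodule.span ℝ (A : Set (EuclideanSpace ℝ (Fin d)))) ≤ k) ∧
    (Module.finrank ℝ (Submodule.span ℝ (A : Set (EuclideanSpace ℝ (Fin d)))) ≤ k →
      (((Submodule.span ℝ (A : Set (EuclideanSpace ℝ (Fin d))))ᗮ :
          Set (EuclideanSpace ℝ (Fin d))) ⊆
          (⋂ a ∈ A, {x : EuclideanSpace ℝ (Fin d) | ⟪a, x⟫ ≤ 0}) ∧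
        d - k ≤ Module.finrank ℝ
          ((Submodule.span ℝ (A : Set (EuclideanSpace ℝ (Fin d))))ᗮ))) := by
  classical
  have hdimV : finrank ℝ (EuclideanSpace ℝ (Fin d)) = d := finrank_euclideanSpace_fin
  have horthK : finrank ℝ (Submodule.span ℝ (A : Set (EuclideanSpace ℝ (Fin d)))) +
      finrank ℝ (Submodule.span ℝ (A : Set (EuclideanSpace ℝ (Fin d))))ᗮ = d := by
    have := (Submodule.span ℝ (A : Set (EuclideanSpace ℝ (Fin d)))).finrank_add_finrank_orthogonal
    rw [hdimV] at this; exact this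
  have hsub : finrank ℝ (Submodule.span ℝ (A : Set (EuclideanSpace ℝ (Fin d)))) ≤ k →
      (((Submodule.span ℝ (A : Set (EuclideanSpace ℝ (Fin d))))ᗮ :
        Set (EuclideanSpace ℝ (Fin d))) ⊆
        ⋂ a ∈ A, {x : EuclideanSpace ℝ (Fin d) | ⟪a, x⟫ ≤ 0}) ∧
      d - k ≤ finrank ℝ (Submodule.span ℝ (A : Set (EuclideanSpace ℝ (Fin d))))ᗮ := by
    intro hAk
    constructor
    · intro x hx
      simp only [Set.mem_iInter]
      intro a ha
      have : ⟪a, x⟫ = 0 := hx a (Submodule.subset_span ha)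
      exact this.le
    · omega
  refine ⟨⟨?_, ?_⟩, hsub⟩
  · -- forward direction
    intro h
    by_contra hlt
    push_neg at hlt
    obtain ⟨s, hsA, hspan, hind⟩ :=
      exists_linearIndependent ℝ (A : Set (EuclideanSpace ℝ (Fin d)))
    have hsfin : s.Finite := A.finite_toSet.subset hsA
    lift s to Finset (EuclideanSpace ℝ (Fin d)) using hsfin
    have hcard : finrank ℝ (Submodule.span ℝ (A : Set (EuclideanSpace ℝ (Fin d)))) = s.card := by
      rw [← hspan]
      haveI : Fintype (s : Set (EuclideanSpace ℝ (Fin d))) := FinsetCoe.fintype s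
      rw [finrank_span_set_eq_card hind]
      simp
    have hkc : k + 1 ≤ s.card := by omega
    obtain ⟨B, hBs, hBcard⟩ := Finset.exists_subset_card_eq hkc
    have hBA : B ⊆ A := fun x hx => by
      have := hBs hx
      exact_mod_cast hsA (by exact_mod_cast this)
    obtain ⟨S, hSrank, hShalf⟩ := h B hBA (le_of_eq hBcard)
    have hSorth : S ≤ (Submodule.span ℝ (B : Set (EuclideanSpace ℝ (Fin d))))ᗮ :=
      mem_orth_of_halfspaces B S hShalf
    have hBind := LinearIndepOn.mono (show LinearIndepOn ℝ id (s : Set (EuclideanSpace ℝ (Fin d))) from hind) (Finset.coe_subset.mpr hBs)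
    have hBrank : finrank ℝ (Submodule.span ℝ (B : Set (EuclideanSpace ℝ (Fin d)))) = k + 1 := by
      haveI : Fintype (B : Set (EuclideanSpace ℝ (Fin d))) := FinsetCoe.fintype B
      rw [finrank_span_set_eq_card hBind]
      simpa using hBcard
    have horthB : finrank ℝ (Submodule.span ℝ (B : Set (EuclideanSpace ℝ (Fin d)))) +
        finrank ℝ (Submodule.span ℝ (B : Set (EuclideanSpace ℝ (Fin d))))ᗮ = d := by
      have := (Submodule.span ℝ (B : Set (EuclideanSpace ℝ (Fin d)))).finrank_add_finrank_orthogonal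
      rw [hdimV] at this; exact this
    have hle : finrank ℝ S ≤
        finrank ℝ (Submodule.span ℝ (B : Set (EuclideanSpace ℝ (Fin d))))ᗮ :=
      Submodule.finrank_mono hSorth
    omega
  · -- reverse direction
    intro hAk B hBA _
    have hKle : d - k ≤ finrank ℝ (Submodule.span ℝ (A : Set (EuclideanSpace ℝ (Fin d))))ᗮ := by
      omega
    obtain ⟨S, hSle, hSrank⟩ :=
      exists_sub_finrank (Submodule.span ℝ (A : Set (EuclideanSpace ℝ (Fin d))))ᗮ (d - k) hKle
    refine ⟨S, hSrank, ?_⟩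
    intro x hx
    simp only [Set.mem_iInter]
    intro a ha
    have : ⟪a, x⟫ = 0 := hSle hx a (Submodule.subset_span (hBA ha))
    exact this.le
end
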